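/- (Lemma 4.6(1).) Every point s ∈ 𝕜⁷ (with coordinates x₀, x₁, x₂, b₀, b₁, c₀, c₁) satisfying Ψ(s) = 0, Δ(s) = 0, ∂_{x₀}Δ(s) = 0 and ∂_{x₁}Δ(s) = 0 (i.e. a point of the hypersurface Ψ = 0 whose image in ℙ² is a singular point of the curve Δ_X) is a singular point of the hypersurface Ψ = 0: all seven partial derivatives of Ψ vanish at s. -/

import Mathlib

open MvPolynomial Finset

noncomputable section

variable (𝕜 : Type*) [Field 𝕜]

/-- `L₀ = c₀x₀ − b₀x₁` in `R = 𝕜[x₀,x₁,x₂,b₀,b₁,c₀,c₁]`, where the variables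
`x₀,x₁,x₂,b₀,b₁,c₀,c₁` are `X 0, X 1, X 2, X 3, X 4, X 5, X 6` respectively. -/
def L0 : MvPolynomial (Fin 7) 𝕜 := X 5 * X 0 - X 3 * X 1

/-- `L₁ = c₁x₀ − b₁x₁`. -/
def L1 : MvPolynomial (Fin 7) 𝕜 := X 6 * X 0 - X 4 * X 1

/-- `π = b₁c₀ − b₀c₁`. -/
def piPoly : MvPolynomial (Fin 7) 𝕜 := X 4 * X 5 - X 3 * X 6

/-- `Δ = σ(x₀,x₁) − x₂^p` where `σ(A,B) = ∑_{i=1}^{p-1} σ_i A^i B^{p-i}`. -/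
def Delta (p : ℕ) (s : ℕ → 𝕜) : MvPolynomial (Fin 7) 𝕜 :=
  (∑ i ∈ Ioo 0 p, C (s i) * X 0 ^ i * X 1 ^ (p - i)) - X 2 ^ p

/-- `𝓛 = L₀^m + ∑_{k=1}^{m-1} e_k L₀^{m-k} L₁^k`. -/
def calL (m : ℕ) (e : ℕ → 𝕜) : MvPolynomial (Fin 7) 𝕜 :=
  L0 𝕜 ^ m + ∑ k ∈ Ioo 0 m, C (e k) * L0 𝕜 ^ (m - k) * L1 𝕜 ^ k

/-- `Ψ = L₁^d − (−1)^d π^p Δ 𝓛` with `d = m + p`. -/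
def Psi (p m : ℕ) (s e : ℕ → 𝕜) : MvPolynomial (Fin 7) 𝕜 :=
  L1 𝕜 ^ (m + p) - C ((-1 : 𝕜) ^ (m + p)) * piPoly 𝕜 ^ p * Delta 𝕜 p s * calL 𝕜 m e

/-- **Lemma 4.6(1).**  Every point `s ∈ 𝕜⁷` on the hypersurface `Ψ = 0`
whose image in `ℙ²` is a singular point of the curve `Δ_X` (i.e. `Δ(s) = 0`,
`∂_{x₀}Δ(s) = 0`, `∂_{x₁}Δ(s) = 0`) is a singular point of the hypersurface `Ψ = 0`:
all seven partial derivatives of `Ψ` vanish at `s`. -/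
theorem singular_over_singular_points_of_boundary
    (p : ℕ) (hp : p.Prime) [CharP 𝕜 p] (m : ℕ) (s e : ℕ → 𝕜)
    (v : Fin 7 → 𝕜)
    (hΨ : eval v (Psi 𝕜 p m s e) = 0)
    (hΔ : eval v (Delta 𝕜 p s) = 0)
    (hΔ₀ : eval v (pderiv (0 : Fin 7) (Delta 𝕜 p s)) = 0)
    (hΔ₁ : eval v (pderiv (1 : Fin 7) (Delta 𝕜 p s)) = 0) :
    ∀ i : Fin 7, eval v (pderiv i (Psi 𝕜 p m s e)) = 0 := by
  have hp2 : 2 ≤ p := hp.two_le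
  have hcast : ((p : ℕ) : MvPolynomial (Fin 7) 𝕜) = 0 := by
    rw [← map_natCast (C : 𝕜 →+* MvPolynomial (Fin 7) 𝕜), CharP.cast_eq_zero 𝕜 p, map_zero]
  have hL1 : eval v (L1 𝕜) = 0 := by
    have h : eval v (L1 𝕜) ^ (m + p) = 0 := by
      have h' := hΨ
      simp only [Psi, map_sub, map_mul, map_pow, hΔ, mul_zero, zero_mul, sub_zero] at h'
      exact h'
    exact pow_eq_zero_iff (by omega) |>.mp h
  intro i
  have hΔi : eval v (pderiv i (Delta 𝕜 p s)) = 0 := by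
    fin_cases i
    · exact hΔ₀
    · exact hΔ₁
    all_goals
      simp (config := { decide := true }) [Delta, pderiv_pow, pderiv_mul, pderiv_C, hcast,
        map_sum, pderiv_X_of_ne, Pi.single_apply]
  have hπp : pderiv i (piPoly 𝕜 ^ p) = 0 := by
    rw [pderiv_pow, hcast, zero_mul, zero_mul]
  simp only [Psi, map_sub, pderiv_mul, hπp, pderiv_C, zero_mul, mul_zero, zero_add, add_zero,
    map_add, map_mul, eval_sub, eval_mul, hΔ, hΔi, pderiv_pow, map_natCast, map_pow, hL1]
  rw [zero_pow (by omega : m + p - 1 ≠ 0)]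
  ring

end
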